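/- The set of pseudo-physical measures of a homeomorphism on a compact metric space is a compact set (in the weak* topology) that contains M(x) for Lebesgue almost every point x, i.e., for Leb-a.e. x, every weak* limit of the empirical measures of x is pseudo-physical. -/

import Mathlib

open MeasureTheory Filter Topology
open scoped ENNReal NNReal

variable {M : Type*} [MetricSpace M] [CompactSpace M] [MeasurableSpace M] [BorelSpace M]

/-- The `n+1`-point empirical (Birkhoff) measure `(1/(n+1)) ∑_{i≤n} δ_{f^i x}`. -/
noncomputable def empMeasure (f : M → M) (x : M) (n : ℕ) : Measure M :=
  ((n + 1 : ℝ≥0∞))⁻¹ • ∑ i ∈ Finset.range (n + 1), Measure.dirac (f^[i] x)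

instance empMeasure.instIsProbabilityMeasure (f : M → M) (x : M) (n : ℕ) :
    IsProbabilityMeasure (empMeasure f x n) := by
  constructor
  simp only [empMeasure, Measure.smul_apply, Measure.finset_sum_apply, smul_eq_mul]
  simp only [Measure.dirac_apply_of_mem (Set.mem_univ _), Finset.sum_const,
    Finset.card_range, nsmul_eq_mul, mul_one]
  push_cast
  rw [ENNReal.inv_mul_cancel (by simp) (by simp)]

/-- Empirical measures as probability measures (with the weak* topology). -/
noncomputable def empProb (f : M → M) (x : M) (n : ℕ) : ProbabilityMeasure M :=
  ⟨empMeasure f x n, inferInstance⟩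

/-- `M(x)`: the set of weak* limit measures of the empirical measures of `x`. -/
def limitMeasures (f : M → M) (x : M) : Set (ProbabilityMeasure M) :=
  {μ | ∃ φ : ℕ → ℕ, StrictMono φ ∧ Tendsto (fun k => empProb f x (φ k)) atTop (𝓝 μ)}

/-- The basin of an invariant measure: points whose empirical measures converge to `μ`. -/
def basin (f : M → M) (μ : ProbabilityMeasure M) : Set M :=
  {x | Tendsto (fun n => empProb f x n) atTop (𝓝 μ)}

/-- `μ` is `f`-invariant. -/
def InvariantMeasure (f : M → M) (μ : ProbabilityMeasure M) : Prop :=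
  Measure.map f μ.toMeasure = μ.toMeasure

/-- Pseudo-physical measure: an invariant measure `μ` such that for every weak*
neighborhood `U` of `μ` (equivalently, every `ε`-ball around `μ` in a metric for the
weak* topology), the set of points `x` with `M(x)` meeting `U`
(i.e. `dist(M(x), μ) < ε`) has positive reference measure. -/
def PseudoPhysical (f : M → M) (Leb : Measure M) (μ : ProbabilityMeasure M) : Prop :=
  InvariantMeasure f μ ∧ ∀ U ∈ 𝓝 μ, 0 < Leb {x | (limitMeasures f x ∩ U).Nonempty}


open BoundedContinuousFunction Set TopologicalSpace

section Prokhorov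

variable {X : Type*} [MetricSpace X] [CompactSpace X] [Nonempty X]
  [MeasurableSpace X] [BorelSpace X]

private lemma NNReal.le_add_nndist' (a b : ℝ≥0) : a ≤ b + nndist a b := by
  have h : (a : ℝ) ≤ (b : ℝ) + dist a b := by
    rw [NNReal.dist_eq]
    have := le_abs_self ((a : ℝ) - b)
    linarith
  have : (a : ℝ) ≤ ((b + nndist a b : ℝ≥0) : ℝ) := by
    push_cast [coe_nndist]
    exact h
  exact_mod_cast this

private lemma bcf_le_nndist (g : X →ᵇ ℝ≥0) (y : X) : (g y : ℝ≥0∞) ≤ (nndist 0 g : ℝ≥0∞) := by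
  have h := NNReal.le_add_nndist' (g y) 0
  simp only [zero_add] at h
  have h2 : nndist (g y) ((0 : X →ᵇ ℝ≥0) y) ≤ nndist g 0 :=
    BoundedContinuousFunction.nndist_coe_le_nndist y
  simp only [BoundedContinuousFunction.coe_zero, Pi.zero_apply] at h2
  have : g y ≤ nndist 0 g := le_trans h (by rwa [nndist_comm (0 : X →ᵇ ℝ≥0) g])
  exact_mod_cast this

private lemma lintegral_bcf_le (g : X →ᵇ ℝ≥0) (ν : Measure X) [IsProbabilityMeasure ν] :
    ∫⁻ x, (g x : ℝ≥0∞) ∂ν ≤ (nndist 0 g : ℝ≥0∞) := by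
  calc ∫⁻ x, (g x : ℝ≥0∞) ∂ν ≤ ∫⁻ _, (nndist 0 g : ℝ≥0∞) ∂ν :=
        lintegral_mono fun x => bcf_le_nndist g x
    _ = (nndist 0 g : ℝ≥0∞) := by simp

private lemma lintegral_bcf_le_add (g h : X →ᵇ ℝ≥0) (ν : Measure X) [IsProbabilityMeasure ν] :
    ∫⁻ x, (g x : ℝ≥0∞) ∂ν ≤ (∫⁻ x, (h x : ℝ≥0∞) ∂ν) + (nndist g h : ℝ≥0∞) := by
  have key : ∀ x, (g x : ℝ≥0∞) ≤ (h x : ℝ≥0∞) + (nndist g h : ℝ≥0∞) := by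
    intro x
    have h1 : g x ≤ h x + nndist (g x) (h x) := NNReal.le_add_nndist' _ _
    have h2 : nndist (g x) (h x) ≤ nndist g h :=
      BoundedContinuousFunction.nndist_coe_le_nndist x
    have : g x ≤ h x + nndist g h := h1.trans (add_le_add_right h2 _)
    exact_mod_cast this
  calc ∫⁻ x, (g x : ℝ≥0∞) ∂ν ≤ ∫⁻ x, ((h x : ℝ≥0∞) + (nndist g h : ℝ≥0∞)) ∂ν :=
        lintegral_mono key
    _ = (∫⁻ x, (h x : ℝ≥0∞) ∂ν) + (nndist g h : ℝ≥0∞) := by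
        rw [lintegral_add_right _ measurable_const, lintegral_const, measure_univ, mul_one]

instance : SeparableSpace (X →ᵇ ℝ≥0) :=
  (ContinuousMap.isometryEquivBoundedOfCompact X ℝ≥0).toHomeomorph.surjective.denseRange.separableSpace
    (ContinuousMap.isometryEquivBoundedOfCompact X ℝ≥0).continuous

/-- Key sequential compactness: every sequence of probability measures on a compact
metric space has a weak*-converging subsequence. -/
theorem prob_exists_tendsto_subseq (μs : ℕ → ProbabilityMeasure X) :
    ∃ (μ : ProbabilityMeasure X) (φ : ℕ → ℕ), StrictMono φ ∧
      Tendsto (fun k => μs (φ k)) atTop (𝓝 μ) := by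
  letI : MetricSpace (ProbabilityMeasure X) := TopologicalSpace.metrizableSpaceMetric _
  obtain ⟨a, -, φ, hφ, ha⟩ :=
    (isCompact_univ (X := ProbabilityMeasure X)).tendsto_subseq (x := μs) (fun n => Set.mem_univ _)
  exact ⟨a, φ, hφ, ha⟩

end Prokhorov

section Prokhorov2
variable (X : Type*) [MetricSpace X] [CompactSpace X] [Nonempty X]
  [MeasurableSpace X] [BorelSpace X]

theorem probabilityMeasure_compactSpace : CompactSpace (ProbabilityMeasure X) := by
  letI : MetricSpace (ProbabilityMeasure X) := TopologicalSpace.metrizableSpaceMetric _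
  refine ⟨?_⟩
  apply IsSeqCompact.isCompact
  intro x _
  obtain ⟨μ, φ, hφ, h⟩ := prob_exists_tendsto_subseq x
  exact ⟨μ, Set.mem_univ _, φ, hφ, h⟩

theorem probabilityMeasure_secondCountable : SecondCountableTopology (ProbabilityMeasure X) := by
  letI : MetricSpace (ProbabilityMeasure X) := TopologicalSpace.metrizableSpaceMetric _
  haveI : CompactSpace (ProbabilityMeasure X) := probabilityMeasure_compactSpace X
  infer_instance

theorem probabilityMeasure_t2 : T2Space (ProbabilityMeasure X) := by
  letI : MetricSpace (ProbabilityMeasure X) := TopologicalSpace.metrizableSpaceMetric _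
  infer_instance

end Prokhorov2


section Dynamics

variable {M : Type*} [MetricSpace M] [CompactSpace M] [Nonempty M]
  [MeasurableSpace M] [BorelSpace M]

theorem limitMeasures_invariant (f : M ≃ₜ M) (x : M) (μ : ProbabilityMeasure M)
    (hμ : μ ∈ limitMeasures (⇑f) x) : InvariantMeasure (⇑f) μ := by
  obtain ⟨ψ, hψ, hconv⟩ := hμ
  haveI hT2 : T2Space (ProbabilityMeasure M) := probabilityMeasure_t2 M
  have hfm : Measurable (⇑f) := f.continuous.measurable
  have hmeas : ∀ g : M →ᵇ ℝ≥0, Measurable fun y : M => (g y : ℝ≥0∞) :=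
    fun g => g.continuous.measurable.coe_nnreal_ennreal
  set c : ℕ → ℝ≥0∞ := fun n => ((n : ℝ≥0∞) + 1)⁻¹ with hc_def
  have hc0 : Tendsto c atTop (𝓝 0) := by
    have h1 : Tendsto (fun n : ℕ => (((n + 1 : ℕ) : ℝ≥0∞))⁻¹) atTop (𝓝 0) :=
      ENNReal.tendsto_inv_nat_nhds_zero.comp (tendsto_add_atTop_nat 1)
    convert h1 using 2 with n
    push_cast
    rfl
  -- the empirical lintegral formula
  have hemp : ∀ (g : M → ℝ≥0∞) (n : ℕ),
      ∫⁻ y, g y ∂(empMeasure (⇑f) x n) =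
        c n * ∑ i ∈ Finset.range (n + 1), g ((⇑f)^[i] x) := by
    intro g n
    simp only [empMeasure, lintegral_smul_measure, lintegral_finset_sum_measure,
      lintegral_dirac, hc_def, smul_eq_mul]
  -- the mapped empirical measures also converge to μ
  have hmapconv : Tendsto
      (fun k => (empProb (⇑f) x (ψ k)).map hfm.aemeasurable) atTop (𝓝 μ) := by
    refine ProbabilityMeasure.tendsto_iff_forall_lintegral_tendsto.mpr fun g => ?_
    set A : ℕ → ℝ≥0∞ := fun n => ∫⁻ y, (g y : ℝ≥0∞) ∂(empMeasure (⇑f) x n) with hA_def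
    set B : ℕ → ℝ≥0∞ := fun n => ∫⁻ y, (g (f y) : ℝ≥0∞) ∂(empMeasure (⇑f) x n) with hB_def
    set C : ℝ≥0∞ := (nndist 0 g : ℝ≥0∞) with hC_def
    have hCne : C ≠ ∞ := ENNReal.coe_ne_top
    have hrw : ∀ n, ∫⁻ y, (g y : ℝ≥0∞)
        ∂(((empProb (⇑f) x n).map hfm.aemeasurable : ProbabilityMeasure M) : Measure M) = B n := by
      intro n
      rw [ProbabilityMeasure.toMeasure_map, lintegral_map (hmeas g) hfm]
      rfl
    have hAconv : Tendsto (fun k => A (ψ k)) atTop (𝓝 (∫⁻ y, (g y : ℝ≥0∞) ∂(μ : Measure M))) :=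
      ProbabilityMeasure.tendsto_iff_forall_lintegral_tendsto.mp hconv g
    have hLgne : (∫⁻ y, (g y : ℝ≥0∞) ∂(μ : Measure M)) ≠ ∞ :=
      ((lintegral_bcf_le g (μ : Measure M)).trans_lt ENNReal.coe_lt_top).ne
    -- the key algebraic identity
    have hkey : ∀ n, B n + c n * (g x : ℝ≥0∞) = A n + c n * (g ((⇑f)^[n+1] x) : ℝ≥0∞) := by
      intro n
      have hBn : B n = c n * ∑ i ∈ Finset.range (n + 1), (g ((⇑f)^[i+1] x) : ℝ≥0∞) := by
        show (∫⁻ y, (g (f y) : ℝ≥0∞) ∂(empMeasure (⇑f) x n)) = _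
        rw [hemp (fun y => (g (f y) : ℝ≥0∞)) n]
        congr 1
        refine Finset.sum_congr rfl fun i _ => ?_
        rw [Function.iterate_succ_apply']
      have hAn : A n = c n * ∑ i ∈ Finset.range (n + 1), (g ((⇑f)^[i] x) : ℝ≥0∞) :=
        hemp (fun y => (g y : ℝ≥0∞)) n
      rw [hBn, hAn, ← mul_add, ← mul_add]
      congr 1
      have h1 : ∑ i ∈ Finset.range (n + 1), (g ((⇑f)^[i+1] x) : ℝ≥0∞) + (g x : ℝ≥0∞) =
          ∑ i ∈ Finset.range (n + 2), (g ((⇑f)^[i] x) : ℝ≥0∞) := by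
        rw [Finset.sum_range_succ' (fun i => (g ((⇑f)^[i] x) : ℝ≥0∞)) (n + 1)]
        simp
      have h2 : ∑ i ∈ Finset.range (n + 1), (g ((⇑f)^[i] x) : ℝ≥0∞) +
          (g ((⇑f)^[n+1] x) : ℝ≥0∞) = ∑ i ∈ Finset.range (n + 2), (g ((⇑f)^[i] x) : ℝ≥0∞) :=
        (Finset.sum_range_succ (fun i => (g ((⇑f)^[i] x) : ℝ≥0∞)) (n + 1)).symm
      rw [h1, h2]
    have hgb : ∀ y : M, (g y : ℝ≥0∞) ≤ C := fun y => bcf_le_nndist g y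
    have hub : ∀ n, B n ≤ A n + c n * C := by
      intro n
      calc B n ≤ B n + c n * (g x : ℝ≥0∞) := le_self_add
        _ = A n + c n * (g ((⇑f)^[n+1] x) : ℝ≥0∞) := hkey n
        _ ≤ A n + c n * C := by gcongr; exact hgb _
    have hlb : ∀ n, A n ≤ B n + c n * C := by
      intro n
      calc A n ≤ A n + c n * (g ((⇑f)^[n+1] x) : ℝ≥0∞) := le_self_add
        _ = B n + c n * (g x : ℝ≥0∞) := (hkey n).symm
        _ ≤ B n + c n * C := by gcongr; exact hgb _
    have hcC : Tendsto (fun n => c n * C) atTop (𝓝 0) := by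
      have := ENNReal.Tendsto.mul_const hc0 (Or.inr hCne)
      simpa using this
    have hcCψ : Tendsto (fun k => c (ψ k) * C) atTop (𝓝 0) :=
      hcC.comp hψ.tendsto_atTop
    have hupper : Tendsto (fun k => A (ψ k) + c (ψ k) * C) atTop
        (𝓝 (∫⁻ y, (g y : ℝ≥0∞) ∂(μ : Measure M))) := by
      have := hAconv.add hcCψ
      simpa using this
    have hlower : Tendsto (fun k => A (ψ k) - c (ψ k) * C) atTop
        (𝓝 (∫⁻ y, (g y : ℝ≥0∞) ∂(μ : Measure M))) := by
      have := ENNReal.Tendsto.sub hAconv hcCψ (Or.inl hLgne)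
      simpa using this
    have hBconv : Tendsto (fun k => B (ψ k)) atTop
        (𝓝 (∫⁻ y, (g y : ℝ≥0∞) ∂(μ : Measure M))) := by
      refine tendsto_of_tendsto_of_tendsto_of_le_of_le' hlower hupper ?_ ?_
      · exact Eventually.of_forall fun k => tsub_le_iff_right.mpr (hlb (ψ k))
      · exact Eventually.of_forall fun k => hub (ψ k)
    simp only [hrw]
    exact hBconv
  -- by continuity of the pushforward, the mapped empiricals converge to μ.map
  have hmapconv' : Tendsto
      (fun k => (empProb (⇑f) x (ψ k)).map hfm.aemeasurable) atTop
      (𝓝 (μ.map hfm.aemeasurable)) := by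
    have hcont := ProbabilityMeasure.continuous_map (Ω := M) (Ω' := M) f.continuous
    exact (hcont.tendsto μ).comp hconv
  have heq : μ.map hfm.aemeasurable = μ := tendsto_nhds_unique hmapconv' hmapconv
  unfold InvariantMeasure
  calc Measure.map (⇑f) μ.toMeasure = (μ.map hfm.aemeasurable).toMeasure :=
        (ProbabilityMeasure.toMeasure_map μ hfm.aemeasurable).symm
    _ = μ.toMeasure := by rw [heq]

end Dynamics

/-- For a homeomorphism of a compact metric space, the set of
pseudo-physical measures is compact (in the weak* topology) and contains `M(x)`
for Lebesgue-a.e. point `x`. -/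
theorem pseudoPhysical_isCompact_and_ae_contains_limitMeasures
    {M : Type*} [MetricSpace M] [CompactSpace M] [Nonempty M]
    [MeasurableSpace M] [BorelSpace M]
    (f : M ≃ₜ M) (Leb : Measure M) [IsProbabilityMeasure Leb] :
    IsCompact {μ : ProbabilityMeasure M | PseudoPhysical (⇑f) Leb μ} ∧
      ∀ᵐ x ∂Leb, limitMeasures (⇑f) x ⊆
        {μ : ProbabilityMeasure M | PseudoPhysical (⇑f) Leb μ} := by
  haveI hT2 : T2Space (ProbabilityMeasure M) := probabilityMeasure_t2 M
  haveI : CompactSpace (ProbabilityMeasure M) := probabilityMeasure_compactSpace M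
  haveI : SecondCountableTopology (ProbabilityMeasure M) := probabilityMeasure_secondCountable M
  have hfm : Measurable (⇑f) := f.continuous.measurable
  constructor
  · -- compactness: the set is closed in a compact space
    have h1 : IsClosed {μ : ProbabilityMeasure M | InvariantMeasure (⇑f) μ} := by
      have heq : {μ : ProbabilityMeasure M | InvariantMeasure (⇑f) μ}
          = {μ : ProbabilityMeasure M | μ.map hfm.aemeasurable = μ} := by
        ext μ
        simp only [Set.mem_setOf_eq, InvariantMeasure]
        constructor
        · intro h
          apply ProbabilityMeasure.toMeasure_injective
          rw [ProbabilityMeasure.toMeasure_map]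
          exact h
        · intro h
          conv_rhs => rw [← h]
          rw [ProbabilityMeasure.toMeasure_map]
      rw [heq]
      exact isClosed_eq (ProbabilityMeasure.continuous_map f.continuous) continuous_id
    have h2 : IsClosed {μ : ProbabilityMeasure M |
        ∀ U ∈ 𝓝 μ, 0 < Leb {x | (limitMeasures (⇑f) x ∩ U).Nonempty}} := by
      rw [← isOpen_compl_iff, isOpen_iff_mem_nhds]
      intro μ hμ
      simp only [Set.mem_compl_iff, Set.mem_setOf_eq, not_forall] at hμ
      obtain ⟨U, hU, hU0⟩ := hμ
      have hU0' : Leb {x | (limitMeasures (⇑f) x ∩ U).Nonempty} = 0 := by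
        rwa [pos_iff_ne_zero, not_not] at hU0
      obtain ⟨V, hVU, hVopen, hμV⟩ := mem_nhds_iff.mp hU
      refine Filter.mem_of_superset (hVopen.mem_nhds hμV) ?_
      intro ν hν
      simp only [Set.mem_compl_iff, Set.mem_setOf_eq, not_forall]
      refine ⟨V, hVopen.mem_nhds hν, ?_⟩
      have hsub : Leb {x | (limitMeasures (⇑f) x ∩ V).Nonempty} = 0 := by
        refine measure_mono_null ?_ hU0'
        rintro x ⟨m, hm1, hm2⟩
        exact ⟨m, hm1, hVU hm2⟩
      simp [hsub]
    have hPeq : {μ : ProbabilityMeasure M | PseudoPhysical (⇑f) Leb μ} =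
        {μ : ProbabilityMeasure M | InvariantMeasure (⇑f) μ} ∩
        {μ : ProbabilityMeasure M |
          ∀ U ∈ 𝓝 μ, 0 < Leb {x | (limitMeasures (⇑f) x ∩ U).Nonempty}} := rfl
    rw [hPeq]
    exact (h1.inter h2).isCompact
  · -- the a.e. statement
    obtain ⟨B, hBc, -, hBbasis⟩ := TopologicalSpace.exists_countable_basis (ProbabilityMeasure M)
    set N : Set (ProbabilityMeasure M) → Set M :=
      fun V => {x | (limitMeasures (⇑f) x ∩ V).Nonempty} with hN
    set J : Set (Set (ProbabilityMeasure M)) := {V ∈ B | Leb (N V) = 0} with hJ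
    have hJc : J.Countable := hBc.mono (Set.sep_subset _ _)
    have hnull : Leb (⋃ V ∈ J, N V) = 0 :=
      (measure_biUnion_null_iff hJc).mpr fun V hV => hV.2
    filter_upwards [measure_eq_zero_iff_ae_notMem.mp hnull] with x hx
    intro μ hμ
    refine ⟨limitMeasures_invariant f x μ hμ, ?_⟩
    intro U hU
    obtain ⟨W, hWU, hWopen, hμW⟩ := mem_nhds_iff.mp hU
    obtain ⟨V, hVB, hμV, hVW⟩ := hBbasis.exists_subset_of_mem_open hμW hWopen
    have hxV : x ∈ N V := ⟨μ, hμ, hμV⟩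
    have hVne : Leb (N V) ≠ 0 := fun h0 =>
      hx (Set.mem_biUnion (show V ∈ J from ⟨hVB, h0⟩) hxV)
    have hpos : (0 : ℝ≥0∞) < Leb (N V) := pos_iff_ne_zero.mpr hVne
    refine hpos.trans_le (measure_mono ?_)
    rintro y ⟨m, hm1, hm2⟩
    exact ⟨m, hm1, hWU (hVW hm2)⟩
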